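/- Let Θ(·;λ) be an arbitrary threshold function and let P be any penalty associated with Θ through the penalty construction. Then for any y ∈ ℝ^n, β̂ = vecΘ(y;λ) is a global minimizer of the problem min over β ∈ ℝ^n of (1/2)‖y − β‖₂² + P(‖β‖₂; λ). -/

import Mathlib

open MeasureTheory Matrix Filter
open scoped ENNReal NNReal BigOperators

noncomputable section

namespace RRRStmt

/-- Squared Frobenius norm `‖A‖_F²`. -/
def froSq {n m : ℕ} (A : Matrix (Fin n) (Fin m) ℝ) : ℝ := ∑ i, ∑ j, (A i j) ^ 2

/-- Frobenius norm `‖A‖_F`. -/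
def fro {n m : ℕ} (A : Matrix (Fin n) (Fin m) ℝ) : ℝ := Real.sqrt (froSq A)

/-- ℓ₂ norm of the `i`-th row of `A`. -/
def rowNorm {n m : ℕ} (A : Matrix (Fin n) (Fin m) ℝ) (i : Fin n) : ℝ :=
  Real.sqrt (∑ j, (A i j) ^ 2)

open Classical in
/-- Number of nonzero rows, `‖A‖_{2,0}`. -/
def numNZRows {n m : ℕ} (A : Matrix (Fin n) (Fin m) ℝ) : ℕ :=
  (Finset.univ.filter fun i => A i ≠ 0).card

open Classical in
/-- Row support of `A`: indices of nonzero rows. -/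
def rowSupp {n m : ℕ} (A : Matrix (Fin n) (Fin m) ℝ) : Finset (Fin n) :=
  Finset.univ.filter fun i => A i ≠ 0

open Classical in
/-- Number of entries at which two matrices differ, `‖A - B‖₀`. -/
def numDiff {n m : ℕ} (A B : Matrix (Fin n) (Fin m) ℝ) : ℕ :=
  (Finset.univ.filter fun q : Fin n × Fin m => A q.1 q.2 ≠ B q.1 q.2).card

/-- A threshold function `Θ(t; λ)`: odd, nondecreasing in `t`, tending to `∞`, and with
`0 ≤ Θ(t;λ) ≤ t` for `t ≥ 0`. -/
def IsThresholdFun (Θ : ℝ → ℝ → ℝ) : Prop :=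
  (∀ t lam : ℝ, 0 ≤ lam → Θ (-t) lam = -Θ t lam) ∧
  (∀ t t' lam : ℝ, 0 ≤ lam → t ≤ t' → Θ t lam ≤ Θ t' lam) ∧
  (∀ lam : ℝ, 0 ≤ lam → Tendsto (fun t => Θ t lam) atTop atTop) ∧
  (∀ t lam : ℝ, 0 ≤ lam → 0 ≤ t → 0 ≤ Θ t lam ∧ Θ t lam ≤ t)

/-- `Θ⁻¹(u;λ) = sup {s : Θ(s;λ) ≤ u}`. -/
def ThetaInv (Θ : ℝ → ℝ → ℝ) (lam u : ℝ) : ℝ := sSup {s : ℝ | Θ s lam ≤ u}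

/-- `P_Θ(t;λ) = ∫₀^{|t|} (Θ⁻¹(u;λ) - u) du`. -/
def PTheta (Θ : ℝ → ℝ → ℝ) (t lam : ℝ) : ℝ := ∫ u in (0:ℝ)..|t|, (ThetaInv Θ lam u - u)

/-- The penalty `P` is associated with the threshold `Θ` through the penalty construction:
`P(t;λ) - P(0;λ) = P_Θ(t;λ) + q(t;λ)` for some nonnegative `q` vanishing on the range of `Θ`. -/
def IsPenaltyFor (Θ P : ℝ → ℝ → ℝ) : Prop :=
  ∃ q : ℝ → ℝ → ℝ, (∀ t lam : ℝ, 0 ≤ lam → 0 ≤ q t lam) ∧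
    (∀ s lam : ℝ, 0 ≤ lam → q (Θ s lam) lam = 0) ∧
    (∀ t lam : ℝ, 0 ≤ lam → P t lam - P 0 lam = PTheta Θ t lam + q t lam)

/-- Euclidean norm of a vector. -/
def vnorm {m : ℕ} (a : Fin m → ℝ) : ℝ := Real.sqrt (∑ j, (a j) ^ 2)

open Classical in
/-- Multivariate thresholding `vecΘ(a;λ) = a·Θ(‖a‖₂;λ)/‖a‖₂` (and `0` at `0`). -/
def vecTheta (Θ : ℝ → ℝ → ℝ) (lam : ℝ) {m : ℕ} (a : Fin m → ℝ) : Fin m → ℝ :=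
  if a = 0 then 0 else (Θ (vnorm a) lam / vnorm a) • a

/-- Row-wise multivariate thresholding of a matrix. -/
def matTheta (Θ : ℝ → ℝ → ℝ) (lam : ℝ) {n m : ℕ} (A : Matrix (Fin n) (Fin m) ℝ) :
    Matrix (Fin n) (Fin m) ℝ :=
  Matrix.of fun i => vecTheta Θ lam (A i)

/-- Hard-thresholding penalty `P_H(t;λ)`. -/
def PH (t lam : ℝ) : ℝ := if |t| < lam then -t ^ 2 / 2 + lam * |t| else lam ^ 2 / 2

/-- Law of an `n × m` noise matrix with i.i.d. `N(0, σ²)` entries. -/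
def gaussianNoise (n m : ℕ) (σ : ℝ) : Measure (Fin n → Fin m → ℝ) :=
  Measure.pi fun _ => Measure.pi fun _ => ProbabilityTheory.gaussianReal 0 (Real.toNNReal (σ ^ 2))

/-- Robust loss `ρ(t;λ) = ∫₀^{|t|} (u - Θ(u;λ)) du`. -/
def rho (Θ : ℝ → ℝ → ℝ) (lam t : ℝ) : ℝ := ∫ u in (0:ℝ)..|t|, (u - Θ u lam)



section AuxLemmas

variable {Θ : ℝ → ℝ → ℝ} {lam : ℝ}

lemma theta_zero (hΘ : IsThresholdFun Θ) (hlam : 0 ≤ lam) : Θ 0 lam = 0 := by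
  have h := hΘ.1 0 lam hlam
  rw [neg_zero] at h; linarith

lemma bddAbove_set (hΘ : IsThresholdFun Θ) (hlam : 0 ≤ lam) (u : ℝ) :
    BddAbove {s : ℝ | Θ s lam ≤ u} := by
  have h := (hΘ.2.2.1 lam hlam).eventually (eventually_gt_atTop u)
  obtain ⟨T, hT⟩ := h.exists_forall_of_atTop
  exact ⟨T, fun s hs => le_of_not_gt fun h' => absurd hs (not_le.2 (hT s h'.le))⟩

lemma nonempty_set (hΘ : IsThresholdFun Θ) (hlam : 0 ≤ lam) {u : ℝ} (hu : 0 ≤ u) :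
    Set.Nonempty {s : ℝ | Θ s lam ≤ u} :=
  ⟨0, by simp [theta_zero hΘ hlam, hu]⟩

lemma thetaInv_mono (hΘ : IsThresholdFun Θ) (hlam : 0 ≤ lam) :
    MonotoneOn (ThetaInv Θ lam) (Set.Ici 0) := by
  intro u hu u' hu' h
  exact csSup_le_csSup (bddAbove_set hΘ hlam u') (nonempty_set hΘ hlam hu)
    (fun s hs => le_trans hs h)

lemma le_thetaInv (hΘ : IsThresholdFun Θ) (hlam : 0 ≤ lam) {z u : ℝ}
    (h : Θ z lam ≤ u) : z ≤ ThetaInv Θ lam u :=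
  le_csSup (bddAbove_set hΘ hlam u) h

lemma thetaInv_le (hΘ : IsThresholdFun Θ) (hlam : 0 ≤ lam) {z u : ℝ}
    (hu : 0 ≤ u) (h : u < Θ z lam) : ThetaInv Θ lam u ≤ z := by
  refine csSup_le (nonempty_set hΘ hlam hu) (fun s hs => ?_)
  by_contra h'
  exact absurd (hΘ.2.1 z s lam hlam (le_of_not_ge h')) (not_le.2 (lt_of_le_of_lt hs h))

lemma integrable_aux (hΘ : IsThresholdFun Θ) (hlam : 0 ≤ lam) {a b : ℝ}
    (ha : 0 ≤ a) (hb : 0 ≤ b) :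
    IntervalIntegrable (fun u => ThetaInv Θ lam u - u) volume a b := by
  have h1 : IntervalIntegrable (ThetaInv Θ lam) volume a b := by
    apply MonotoneOn.intervalIntegrable
    refine (thetaInv_mono hΘ hlam).mono (fun x hx => ?_)
    rw [Set.mem_uIcc] at hx
    rcases hx with h | h <;> [exact le_trans ha h.1; exact le_trans hb h.1]
  exact h1.sub intervalIntegral.intervalIntegrable_id

lemma scalar_min (hΘ : IsThresholdFun Θ) (hlam : 0 ≤ lam)
    {z r : ℝ} (hz : 0 ≤ z) (hr : 0 ≤ r) :
    (1/2) * (z - Θ z lam)^2 + PTheta Θ (Θ z lam) lam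
      ≤ (1/2) * (z - r)^2 + PTheta Θ r lam := by
  set θ := Θ z lam with hθdef
  have hθ0 : 0 ≤ θ := (hΘ.2.2.2 z lam hlam hz).1
  set Inv := ThetaInv Θ lam with hInv
  have hPθ : PTheta Θ θ lam = ∫ u in (0:ℝ)..θ, (Inv u - u) := by
    rw [PTheta, abs_of_nonneg hθ0]
  have hPr : PTheta Θ r lam = ∫ u in (0:ℝ)..r, (Inv u - u) := by
    rw [PTheta, abs_of_nonneg hr]
  rw [hPθ, hPr]
  have hsplit : ∫ u in (0:ℝ)..r, (Inv u - u)
      = (∫ u in (0:ℝ)..θ, (Inv u - u)) + ∫ u in θ..r, (Inv u - u) :=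
    (intervalIntegral.integral_add_adjacent_intervals
      (integrable_aux hΘ hlam le_rfl hθ0) (integrable_aux hΘ hlam hθ0 hr)).symm
  rw [hsplit]
  have hpoly : ∫ u in θ..r, (u - z) = (r^2 - θ^2)/2 - z*(r - θ) := by
    rw [intervalIntegral.integral_sub intervalIntegral.intervalIntegrable_id
      (intervalIntegrable_const (c:=z))]
    simp [integral_id]
    ring
  have hcomb : (∫ u in θ..r, (Inv u - u)) + ∫ u in θ..r, (u - z)
      = ∫ u in θ..r, (Inv u - z) := by
    rw [← intervalIntegral.integral_add (integrable_aux hΘ hlam hθ0 hr)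
      (intervalIntegral.intervalIntegrable_id.sub
        (intervalIntegrable_const (c:=z)))]
    congr 1; funext u; ring
  have hkey : 0 ≤ ∫ u in θ..r, (Inv u - z) := by
    rcases le_or_gt θ r with hc | hc
    · apply intervalIntegral.integral_nonneg hc
      intro u hu
      have : z ≤ Inv u := le_thetaInv hΘ hlam (hθdef ▸ hu.1)
      linarith
    · rw [intervalIntegral.integral_symm]
      have hneg : (∫ u in r..θ, (Inv u - z)) ≤ 0 := by
        have h0 : (∫ u in r..θ, (Inv u - z)) = - ∫ u in r..θ, (z - Inv u) := by
          rw [← intervalIntegral.integral_neg]; congr 1; funext u; ring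
        rw [h0, neg_nonpos]
        apply intervalIntegral.integral_nonneg_of_ae_restrict
        · exact hc.le
        · have h1 : ∀ᵐ u : ℝ ∂volume, u ≠ θ := by
            rw [ae_iff]
            have : {u : ℝ | ¬ u ≠ θ} = {θ} := by ext u; simp
            simp [this]
          filter_upwards [ae_restrict_of_ae h1, ae_restrict_mem measurableSet_Icc]
            with u hu hmem
          have hu0 : 0 ≤ u := le_trans hr hmem.1
          have huθ : u < θ := lt_of_le_of_ne hmem.2 hu
          have := thetaInv_le hΘ hlam hu0 huθ
          simp only [Pi.zero_apply]
          linarith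
      linarith
  rw [← hcomb] at hkey
  rw [hpoly] at hkey
  nlinarith [hkey]

end AuxLemmas

/-- Lemma 1: `β̂ = vecΘ(y;λ)` is a global minimizer of
`β ↦ ½‖y - β‖₂² + P(‖β‖₂;λ)` for any penalty `P` associated with `Θ`. -/
theorem vec_thresholding_global_min (Θ P : ℝ → ℝ → ℝ)
    (hΘ : IsThresholdFun Θ) (hP : IsPenaltyFor Θ P) (lam : ℝ) (hlam : 0 ≤ lam)
    {n : ℕ} (y : Fin n → ℝ) :
    ∀ β : Fin n → ℝ,
      (1/2) * (∑ j, (y j - vecTheta Θ lam y j) ^ 2) + P (vnorm (vecTheta Θ lam y)) lam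
        ≤ (1/2) * (∑ j, (y j - β j) ^ 2) + P (vnorm β) lam := by
  intro β
  obtain ⟨q, hq0, hqΘ, hPq⟩ := hP
  set z := vnorm y with hzdef
  have hz : 0 ≤ z := Real.sqrt_nonneg _
  have hz2 : ∑ j, (y j)^2 = z^2 := (Real.sq_sqrt (Finset.sum_nonneg fun j _ => sq_nonneg _)).symm
  set θ := Θ z lam with hθdef
  have hθ0 : 0 ≤ θ := (hΘ.2.2.2 z lam hlam hz).1
  set r := vnorm β with hrdef
  have hr : 0 ≤ r := Real.sqrt_nonneg _
  have hr2 : ∑ j, (β j)^2 = r^2 := (Real.sq_sqrt (Finset.sum_nonneg fun j _ => sq_nonneg _)).symm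
  have hLsum : ∑ j, (y j - vecTheta Θ lam y j) ^ 2 = (z - θ)^2 ∧
      vnorm (vecTheta Θ lam y) = θ := by
    by_cases hy : y = 0
    · have hz0 : z = 0 := by simp [hzdef, vnorm, hy]
      have hθz : θ = 0 := by rw [hθdef, hz0, theta_zero hΘ hlam]
      constructor
      · simp [vecTheta, hy, hθz, hz0]
      · simp [vecTheta, hy, vnorm, hθz]
    · have hzpos : 0 < z := by
        rcases Function.ne_iff.1 hy with ⟨j, hj⟩
        apply Real.sqrt_pos.2
        exact Finset.sum_pos' (fun i _ => sq_nonneg _)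
          ⟨j, Finset.mem_univ j, pow_two_pos_of_ne_zero hj⟩
      have hb : vecTheta Θ lam y = fun j => (θ / z) * y j := by
        funext j; simp [vecTheta, hy, hzdef, hθdef]
      constructor
      · rw [hb]
        have : ∀ j, (y j - θ / z * y j)^2 = (1 - θ/z)^2 * (y j)^2 := fun j => by ring
        rw [Finset.sum_congr rfl fun j _ => this j, ← Finset.mul_sum, hz2]
        field_simp
      · rw [hb, vnorm]
        have : ∀ j, (θ / z * y j)^2 = (θ/z)^2 * (y j)^2 := fun j => by ring
        rw [Finset.sum_congr rfl fun j _ => this j, ← Finset.mul_sum, hz2]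
        have h2 : (θ/z)^2 * z^2 = θ^2 := by field_simp
        rw [h2, Real.sqrt_sq hθ0]
  have hRsum : (z - r)^2 ≤ ∑ j, (y j - β j) ^ 2 := by
    have hexp : ∑ j, (y j - β j)^2
        = (∑ j, (y j)^2) - 2*(∑ j, y j * β j) + ∑ j, (β j)^2 := by
      rw [Finset.mul_sum, ← Finset.sum_sub_distrib, ← Finset.sum_add_distrib]
      exact Finset.sum_congr rfl fun j _ => by ring
    have hCS : (∑ j, y j * β j)^2 ≤ z^2 * r^2 := by
      rw [← hz2, ← hr2]
      exact Finset.sum_mul_sq_le_sq_mul_sq Finset.univ y β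
    have hzr : 0 ≤ z * r := mul_nonneg hz hr
    have hle : ∑ j, y j * β j ≤ z * r := by nlinarith
    rw [hexp, hz2, hr2]; nlinarith
  have hPθ : P θ lam = P 0 lam + PTheta Θ θ lam := by
    have := hPq θ lam hlam
    rw [hθdef] at *
    have h0 := hqΘ z lam hlam
    linarith [hPq (Θ z lam) lam hlam, hqΘ z lam hlam]
  have hPr : P 0 lam + PTheta Θ r lam ≤ P r lam := by
    linarith [hPq r lam hlam, hq0 r lam hlam]
  have hmin := scalar_min hΘ hlam (z := z) (r := r) hz hr
  rw [hLsum.1, hLsum.2, ← hθdef] at *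
  calc (1/2) * (z - θ)^2 + P θ lam = (1/2) * (z - θ)^2 + PTheta Θ θ lam + P 0 lam := by
        rw [hPθ]; ring
    _ ≤ (1/2) * (z - r)^2 + PTheta Θ r lam + P 0 lam := by rw [hθdef]; linarith [hmin]
    _ ≤ (1/2) * (∑ j, (y j - β j) ^ 2) + P r lam := by linarith

end RRRStmt
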